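/- For any measurable set B of finite measure and positive measurable function V on B, and any λ > 0: μ({x ∈ B : V(x) < λ}) ≤ (1/log(1 + 1/λ)) ∫_B log(1 + 1/V(x)) dμ(x). Moreover, log(1 + 1/V) ≤ log(1+V) + log(1/V)·1_{V<1} ≤ V + log(1/V)·1_{V<1}, so if additionally ∫_B log(1/V) dμ ≤ 0, then μ({x ∈ B : V(x) < λ}) ≤ (1/log(1 + 1/λ)) ∫_B V dμ. -/

import Mathlib

open MeasureTheory

theorem stmt6 {α : Type*} [MeasurableSpace α] (μ : Measure α)
    (B : Set α) (hB : MeasurableSet B) (hBfin : μ B < ⊤)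
    (V : α → ℝ) (hV : ∀ x, 0 < V x) (hVmeas : Measurable V)
    (hint1 : IntegrableOn (fun x => Real.log (1 + (V x)⁻¹)) B μ)
    (hint2 : IntegrableOn V B μ)
    (hint3 : IntegrableOn (fun x => Real.log (V x)⁻¹) B μ)
    (lam : ℝ) (hlam : 0 < lam) :
    (μ {x ∈ B | V x < lam}).toReal ≤
        (Real.log (1 + lam⁻¹))⁻¹ * ∫ x in B, Real.log (1 + (V x)⁻¹) ∂μ ∧
    ((∫ x in B, Real.log (V x)⁻¹ ∂μ) ≤ 0 →
      (μ {x ∈ B | V x < lam}).toReal ≤ (Real.log (1 + lam⁻¹))⁻¹ * ∫ x in B, V x ∂μ) := by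
  set c : ℝ := Real.log (1 + lam⁻¹) with hc_def
  have hc : 0 < c := Real.log_pos (by linarith [inv_pos.mpr hlam])
  set S : Set α := {x ∈ B | V x < lam} with hS_def
  have hSmeas : MeasurableSet S := hB.inter (measurableSet_lt hVmeas measurable_const)
  have hSsub : S ⊆ B := fun x hx => hx.1
  have hSfin : μ S ≠ ⊤ := (lt_of_le_of_lt (measure_mono hSsub) hBfin).ne
  have hfnonneg : ∀ x, 0 ≤ Real.log (1 + (V x)⁻¹) := fun x =>
    Real.log_nonneg (by linarith [inv_pos.mpr (hV x)])
  have hintS : IntegrableOn (fun x => Real.log (1 + (V x)⁻¹)) S μ :=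
    hint1.mono_set hSsub
  have h1 : c * (μ S).toReal ≤ ∫ x in S, Real.log (1 + (V x)⁻¹) ∂μ := by
    apply setIntegral_ge_of_const_le_real hSmeas hSfin _ hintS
    intro x hx
    have hVx := hV x
    have : lam⁻¹ ≤ (V x)⁻¹ := (inv_le_inv₀ hlam hVx).mpr hx.2.le
    exact Real.log_le_log (by linarith [inv_pos.mpr hlam]) (by linarith)
  have h2 : (∫ x in S, Real.log (1 + (V x)⁻¹) ∂μ) ≤
      ∫ x in B, Real.log (1 + (V x)⁻¹) ∂μ := by
    apply setIntegral_mono_set hint1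
    · exact Filter.Eventually.of_forall fun x => hfnonneg x
    · exact HasSubset.Subset.eventuallyLE hSsub
  have key : (μ S).toReal ≤ c⁻¹ * ∫ x in B, Real.log (1 + (V x)⁻¹) ∂μ := by
    have h12 := h1.trans h2
    calc (μ S).toReal = c⁻¹ * (c * (μ S).toReal) := by field_simp
      _ ≤ c⁻¹ * ∫ x in B, Real.log (1 + (V x)⁻¹) ∂μ :=
          mul_le_mul_of_nonneg_left h12 (inv_nonneg.mpr hc.le)
  refine ⟨key, fun h3 => ?_⟩
  -- pointwise identity: log(1+1/V) = log(1+V) + log(V⁻¹)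
  have hid : ∀ x, Real.log (1 + (V x)⁻¹) = Real.log (1 + V x) + Real.log (V x)⁻¹ := by
    intro x
    have hVx := hV x
    have : 1 + (V x)⁻¹ = (1 + V x) * (V x)⁻¹ := by field_simp; ring
    rw [this, Real.log_mul (by positivity) (by positivity)]
  have hintlog : IntegrableOn (fun x => Real.log (1 + V x)) B μ := by
    have : (fun x => Real.log (1 + V x)) =
        fun x => Real.log (1 + (V x)⁻¹) - Real.log (V x)⁻¹ := by
      funext x; rw [hid x]; ring
    rw [this]; exact hint1.sub hint3
  have hsplit : (∫ x in B, Real.log (1 + (V x)⁻¹) ∂μ) =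
      (∫ x in B, Real.log (1 + V x) ∂μ) + ∫ x in B, Real.log (V x)⁻¹ ∂μ := by
    rw [← integral_add hintlog hint3]
    exact integral_congr_ae (Filter.Eventually.of_forall fun x => hid x)
  have hlogle : (∫ x in B, Real.log (1 + V x) ∂μ) ≤ ∫ x in B, V x ∂μ := by
    apply integral_mono hintlog hint2
    intro x
    have := Real.log_le_sub_one_of_pos (x := 1 + V x) (by linarith [hV x])
    linarith
  have hfinal : (∫ x in B, Real.log (1 + (V x)⁻¹) ∂μ) ≤ ∫ x in B, V x ∂μ := by
    rw [hsplit]; linarith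
  calc (μ S).toReal ≤ c⁻¹ * ∫ x in B, Real.log (1 + (V x)⁻¹) ∂μ := key
    _ ≤ c⁻¹ * ∫ x in B, V x ∂μ := by
        apply mul_le_mul_of_nonneg_left hfinal (inv_nonneg.mpr hc.le)
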